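/- With R, π, K, V, L as above (L a maximal integral lattice with dual L*), one has {l ∈ L : ⟨l, L⟩ ⊆ πR} = π L*. -/

import Mathlib

set_option linter.unusedSectionVars false
set_option linter.unusedVariables false

section Aux

variable {R : Type*} [CommRing R] [IsDomain R] [IsDiscreteValuationRing R]
  {K : Type*} [Field K] [Algebra R K] [IsFractionRing R K]
  {V : Type*} [AddCommGroup V] [Module K V] [FiniteDimensional K V]
  [Module R V] [IsScalarTower R K V]
  {B : LinearMap.BilinForm K V}
  {L : Submodule R V}

/-- If `u` pairs integrally with `L` and with itself, then `u ∈ L` by maximality. -/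
lemma aux_mem (hsymm : ∀ v w : V, B v w = B w v) (hfg : L.FG)
    (hfull : Submodule.span K (L : Set V) = ⊤)
    (hint : ∀ x ∈ L, ∀ y ∈ L, ∃ r : R, algebraMap R K r = B x y)
    (hmax : ∀ L' : Submodule R V, L'.FG → Submodule.span K (L' : Set V) = ⊤ →
      (∀ x ∈ L', ∀ y ∈ L', ∃ r : R, algebraMap R K r = B x y) → L ≤ L' → L' = L)
    (u : V) (h1 : ∀ x ∈ L, ∃ r : R, algebraMap R K r = B u x)
    (h2 : ∃ r : R, algebraMap R K r = B u u) : u ∈ L := by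
  set M := L ⊔ Submodule.span R ({u} : Set V) with hM
  have hLM : L ≤ M := le_sup_left
  have huM : u ∈ M := Submodule.mem_sup_right (Submodule.mem_span_singleton_self u)
  have hMfg : M.FG := hfg.sup (Submodule.fg_span_singleton u)
  have hMfull : Submodule.span K (M : Set V) = ⊤ := by
    rw [eq_top_iff, ← hfull]
    exact Submodule.span_mono hLM
  have key : ∀ z ∈ M, ∃ x ∈ L, ∃ r : R, z = x + r • u := by
    intro z hz
    obtain ⟨x, hx, w, hw, rfl⟩ := Submodule.mem_sup.mp hz
    obtain ⟨r, rfl⟩ := Submodule.mem_span_singleton.mp hw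
    exact ⟨x, hx, r, rfl⟩
  have hMint : ∀ x ∈ M, ∀ y ∈ M, ∃ r : R, algebraMap R K r = B x y := by
    intro z hz w hw
    obtain ⟨x, hx, r, rfl⟩ := key z hz
    obtain ⟨y, hy, s, rfl⟩ := key w hw
    obtain ⟨rxy, hrxy⟩ := hint x hx y hy
    obtain ⟨rux, hrux⟩ := h1 x hx
    obtain ⟨ruy, hruy⟩ := h1 y hy
    obtain ⟨ruu, hruu⟩ := h2
    refine ⟨rxy + s * rux + r * ruy + r * s * ruu, ?_⟩
    have hr : (r : R) • u = algebraMap R K r • u := (algebraMap_smul K r u).symm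
    have hs : (s : R) • u = algebraMap R K s • u := (algebraMap_smul K s u).symm
    rw [hr, hs]
    simp only [map_add, map_smul, LinearMap.add_apply, LinearMap.smul_apply, smul_eq_mul,
      map_mul]
    rw [hrxy, hrux, hruy, hruu, hsymm u x]
    ring
  have := hmax M hMfg hMfull hMint hLM
  rwa [this] at huM

/-- `π L* ⊆ L` for a maximal integral lattice. -/
lemma aux_pi_smul (π : R) (hπ : Irreducible π)
    (hsymm : ∀ v w : V, B v w = B w v) (hfg : L.FG)
    (hfull : Submodule.span K (L : Set V) = ⊤)
    (hint : ∀ x ∈ L, ∀ y ∈ L, ∃ r : R, algebraMap R K r = B x y)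
    (hmax : ∀ L' : Submodule R V, L'.FG → Submodule.span K (L' : Set V) = ⊤ →
      (∀ x ∈ L', ∀ y ∈ L', ∃ r : R, algebraMap R K r = B x y) → L ≤ L' → L' = L)
    (v : V) (hv : ∀ x ∈ L, ∃ r : R, algebraMap R K r = B x v) :
    π • v ∈ L := by
  set a : K := B v v with ha
  -- Step A : some power of π clears denominators of a
  have hA : ∃ n : ℕ, ∃ r : R, algebraMap R K r = algebraMap R K π ^ n * a := by
    obtain ⟨x, y, hy, hxy⟩ := IsFractionRing.div_surjective (A := R) a
    have hy0 : y ≠ 0 := nonZeroDivisors.ne_zero hy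
    obtain ⟨n, c, hc⟩ := IsDiscreteValuationRing.associated_pow_irreducible hy0 hπ
    refine ⟨n, c.1 * x, ?_⟩
    have hyK : algebraMap R K y ≠ 0 := by
      rw [map_ne_zero_iff _ (IsFractionRing.injective R K)]; exact hy0
    rw [map_mul, ← hxy, ← map_pow, ← hc, map_mul]
    field_simp
  -- Step B : descend to show π * a is integral
  have hB1 : ∀ n : ℕ, (∃ r : R, algebraMap R K r = algebraMap R K π ^ n * a) →
      ∃ r : R, algebraMap R K r = algebraMap R K π * a := by
    intro n
    induction n with
    | zero =>
      rintro ⟨r, hr⟩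
      exact ⟨π * r, by rw [map_mul, hr, pow_zero, one_mul]⟩
    | succ n ih =>
      rintro ⟨r, hr⟩
      match n, ih with
      | 0, _ => exact ⟨r, by rw [hr, pow_one]⟩
      | (m+1), ih =>
        -- n = m+1 ≥ 1, so n+1 ≥ 2 ; set u = π^n • v ∈ L
        set u : V := (π ^ (m+1)) • v with hu
        have huK : u = (algebraMap R K π ^ (m+1)) • v := by
          rw [hu, ← map_pow, algebraMap_smul]
        have hmem : u ∈ L := by
          apply aux_mem hsymm hfg hfull hint hmax
          · intro x hx
            obtain ⟨rx, hrx⟩ := hv x hx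
            refine ⟨π ^ (m+1) * rx, ?_⟩
            rw [huK, map_mul, map_pow, hrx]
            simp [hsymm v x, smul_eq_mul, Algebra.smul_def]
          · refine ⟨π ^ m * r, ?_⟩
            rw [huK, map_mul, map_pow, hr]
            simp only [map_smul, LinearMap.smul_apply, smul_eq_mul, ← ha]
            ring
        obtain ⟨r', hr'⟩ := hv u hmem
        apply ih
        refine ⟨r', ?_⟩
        rw [hr', huK]
        simp only [map_smul, LinearMap.smul_apply, smul_eq_mul, ← ha]
  obtain ⟨n, hn⟩ := hA
  obtain ⟨r1, hr1⟩ := hB1 n hn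
  -- Step D : π • v pairs integrally with L and itself
  apply aux_mem hsymm hfg hfull hint hmax
  · intro x hx
    obtain ⟨rx, hrx⟩ := hv x hx
    refine ⟨π * rx, ?_⟩
    rw [← algebraMap_smul K π v, map_mul, hrx]
    simp [hsymm v x, smul_eq_mul, Algebra.smul_def]
  · refine ⟨π * r1, ?_⟩
    rw [← algebraMap_smul K π v, map_mul, hr1]
    simp only [map_smul, LinearMap.smul_apply, smul_eq_mul, ← ha]

end Aux

/-- For a maximal integral lattice `L` with dual `L*`, one has
`{l ∈ L : ⟨l, L⟩ ⊆ πR} = π L*`. -/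
theorem stmt15 (R : Type*) [CommRing R] [IsDomain R] [IsDiscreteValuationRing R]
    (π : R) (hπ : Irreducible π)
    (K : Type*) [Field K] [Algebra R K] [IsFractionRing R K]
    (V : Type*) [AddCommGroup V] [Module K V] [FiniteDimensional K V]
    [Module R V] [IsScalarTower R K V]
    (B : LinearMap.BilinForm K V) (hB : B.Nondegenerate)
    (hsymm : ∀ v w : V, B v w = B w v)
    (L : Submodule R V) (hfg : L.FG)
    (hfull : Submodule.span K (L : Set V) = ⊤)
    (hint : ∀ x ∈ L, ∀ y ∈ L, ∃ r : R, algebraMap R K r = B x y)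
    (hmax : ∀ L' : Submodule R V, L'.FG → Submodule.span K (L' : Set V) = ⊤ →
      (∀ x ∈ L', ∀ y ∈ L', ∃ r : R, algebraMap R K r = B x y) → L ≤ L' → L' = L) :
    ∀ l : V,
      (l ∈ L ∧ ∀ x ∈ L, ∃ r : R, algebraMap R K (π * r) = B l x) ↔
        (∃ v : V, (∀ x ∈ L, ∃ r : R, algebraMap R K r = B x v) ∧ l = π • v) := by
  intro l
  have hπK : algebraMap R K π ≠ 0 := by
    rw [map_ne_zero_iff _ (IsFractionRing.injective R K)]; exact hπ.ne_zero
  constructor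
  · rintro ⟨hl, hint'⟩
    refine ⟨(algebraMap R K π)⁻¹ • l, ?_, ?_⟩
    · intro x hx
      obtain ⟨r, hr⟩ := hint' x hx
      refine ⟨r, ?_⟩
      rw [map_mul] at hr
      have : B x ((algebraMap R K π)⁻¹ • l) = (algebraMap R K π)⁻¹ * B x l := by
        simp
      rw [this, ← hsymm l x, ← hr]
      field_simp
    · rw [← algebraMap_smul K π, smul_smul, mul_inv_cancel₀ hπK, one_smul]
  · rintro ⟨v, hv, rfl⟩
    constructor
    · exact aux_pi_smul π hπ hsymm hfg hfull hint hmax v hv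
    · intro x hx
      obtain ⟨r, hr⟩ := hv x hx
      refine ⟨r, ?_⟩
      rw [← algebraMap_smul K π v, map_mul, hr]
      simp [hsymm v x, Algebra.smul_def]
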